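/- arXiv:1303.4212 — 2 statements merged into one kernel-verified Lean document; each statement's English description precedes it below -/
import Mathlib

section
/- Let f : X → 𝒢(Z,C) be a convex function and x₀ ∈ dom f. Then x₀ solves the scalarized Minty inequality (mvi_M): for all x ∈ X with f(x) ≠ f(x₀) there exists z* ∈ C⁻∖{0} with φ_{f,z*}(x) ≠ −∞ and φ′_{f,z*}(x, x₀−x) < 0, if and only if for all x ∈ dom f with f(x) ≠ f(x₀) one has cl co ⋃_{t∈(0,1)} f(x₀ + t(x−x₀)) ⊇ f(x) and cl co ⋃_{t∈(0,1)} f(x₀ + t(x−x₀)) ≠ f(x). -/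
open Set Pointwise

noncomputable section

variable {Z : Type*} [AddCommGroup Z] [Module ℝ Z] [TopologicalSpace Z]

/-- The inf-residual `A ⊖ B = {z : B + {z} ⊆ A}`. -/
def resid (A B : Set Z) : Set Z := {z : Z | B + {z} ⊆ A}

/-- The recession cone `0⁺A`, with the convention `0⁺∅ = ∅`. -/
def recCone (A : Set Z) : Set Z := {z : Z | A.Nonempty ∧ A + {z} ⊆ A}

/-- `A ⊕ B = cl (A + B)`. -/
def oplus (A B : Set Z) : Set Z := closure (A + B)

/-- Membership in `𝒢(Z,C)`: `A = cl co (A + C)`. -/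
def IsG (C A : Set Z) : Prop := A = closure (convexHull ℝ (A + C))

/-- The set `C⁻ \ {0}` of nonzero elements of the negative dual cone. -/
def negDualNZ (C : Set Z) : Set (Z →L[ℝ] ℝ) :=
  {p : Z →L[ℝ] ℝ | (∀ c ∈ C, p c ≤ 0) ∧ p ≠ 0}

/-- `inf {-z*(z) : z ∈ A}` as an extended real. -/
def scal (p : Z →L[ℝ] ℝ) (A : Set Z) : EReal :=
  sInf ((fun z => ((-(p z) : ℝ) : EReal)) '' A)

/-- Support function `σ(z*|A) = sup {z*(z) : z ∈ A}` as an extended real. -/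
def suppF (p : Z →L[ℝ] ℝ) (A : Set Z) : EReal :=
  sSup ((fun z => ((p z : ℝ) : EReal)) '' A)

/-- Inf-residuation on the extended reals: `r ⊖ s = inf {t ∈ ℝ : r ≤ s + t}`. -/
def eresid (r s : EReal) : EReal :=
  sInf ((fun t : ℝ => (t : EReal)) '' {t : ℝ | r ≤ s + (t : EReal)})

variable {X : Type*} [AddCommGroup X] [Module ℝ X]

/-- The scalarization `φ_{f,z*}(x) = inf {-z*(z) : z ∈ f(x)}`. -/
def phi (f : X → Set Z) (p : Z →L[ℝ] ℝ) (x : X) : EReal := scal p (f x)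

/-- Convexity for set-valued functions:
`f(t x₁ + (1-t) x₂) ⊇ cl (t f(x₁) + (1-t) f(x₂))`. -/
def ConvexSV (f : X → Set Z) : Prop :=
  ∀ x₁ x₂ : X, ∀ t : ℝ, t ∈ Ioo (0:ℝ) 1 →
    closure (t • f x₁ + (1 - t) • f x₂) ⊆ f (t • x₁ + (1 - t) • x₂)

/-- The set-valued directional derivative
`f′(x,u) = ⋂_{t₀>0} cl co ⋃_{0<t<t₀} (1/t)•(f(x+tu) ⊖ f(x))`. -/
def sder (f : X → Set Z) (x u : X) : Set Z :=
  ⋂ t₀ ∈ Ioi (0:ℝ), closure (convexHull ℝ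
    (⋃ t ∈ Ioo (0:ℝ) t₀, (1 / t) • resid (f (x + t • u)) (f x)))

/-- The scalar Dini derivative `φ′_{f,z*}(x,u) = inf_{t>0} (1/t)(φ(x+tu) ⊖ φ(x))`. -/
def phiDer (f : X → Set Z) (p : Z →L[ℝ] ℝ) (x u : X) : EReal :=
  ⨅ t ∈ Ioi (0:ℝ), (((1 / t : ℝ)) : EReal) * eresid (phi f p (x + t • u)) (phi f p x)

end


section helperLemmas

open Set Pointwise

variable {Z : Type*} [AddCommGroup Z] [Module ℝ Z] [TopologicalSpace Z]
variable {X : Type*} [AddCommGroup X] [Module ℝ X]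

lemma scal_le_of_mem {p : Z →L[ℝ] ℝ} {A : Set Z} {z : Z} (hz : z ∈ A) :
    scal p A ≤ ((-(p z) : ℝ) : EReal) :=
  sInf_le (Set.mem_image_of_mem _ hz)

lemma scal_anti {p : Z →L[ℝ] ℝ} {A B : Set Z} (h : A ⊆ B) : scal p B ≤ scal p A :=
  sInf_le_sInf (Set.image_mono h)

lemma le_scal {p : Z →L[ℝ] ℝ} {A : Set Z} {c : ℝ} (h : ∀ z ∈ A, c ≤ -(p z)) :
    (c : EReal) ≤ scal p A := by
  refine le_sInf ?_
  rintro _ ⟨z, hz, rfl⟩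
  show (c : EReal) ≤ ((-(p z) : ℝ) : EReal)
  exact_mod_cast h z hz

lemma scal_lt_top {p : Z →L[ℝ] ℝ} {A : Set Z} (h : A.Nonempty) : scal p A < ⊤ := by
  obtain ⟨z, hz⟩ := h
  exact lt_of_le_of_lt (scal_le_of_mem hz) (EReal.coe_lt_top _)

lemma exists_of_scal_lt {p : Z →L[ℝ] ℝ} {A : Set Z} {c : EReal} (h : scal p A < c) :
    ∃ z ∈ A, ((-(p z) : ℝ) : EReal) < c := by
  obtain ⟨b, hb, hlt⟩ := sInf_lt_iff.mp h
  obtain ⟨z, hz, rfl⟩ := hb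
  exact ⟨z, hz, hlt⟩

lemma eresid_le {r s : EReal} {t : ℝ} (h : r ≤ s + (t : EReal)) : eresid r s ≤ (t : EReal) :=
  sInf_le ⟨t, h, rfl⟩

lemma eresid_lt_zero {r s : EReal} (h : eresid r s < 0) : ∃ t : ℝ, t < 0 ∧ r ≤ s + (t : EReal) := by
  obtain ⟨b, hb, hlt⟩ := sInf_lt_iff.mp h
  obtain ⟨t, ht, rfl⟩ := hb
  have hlt' : (t : EReal) < 0 := hlt
  exact ⟨t, by exact_mod_cast hlt', ht⟩

lemma term_neg {t : ℝ} (ht : 0 < t) {e : EReal} (he : e < 0) :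
    (((1 / t : ℝ)) : EReal) * e < 0 := by
  induction e with
  | bot =>
      rw [EReal.coe_mul_bot_of_pos (by positivity)]
      exact bot_lt_iff_ne_bot.mpr (by simp)
  | coe x =>
      rw [← EReal.coe_mul]
      exact_mod_cast mul_neg_of_pos_of_neg (by positivity) (by exact_mod_cast he)
  | top => exact absurd he (by simp)

lemma neg_of_term_neg {t : ℝ} (ht : 0 < t) {e : EReal}
    (h : (((1 / t : ℝ)) : EReal) * e < 0) : e < 0 := by
  by_contra hc
  push_neg at hc
  exact absurd h (not_lt.2 (mul_nonneg (by exact_mod_cast le_of_lt (by positivity : (0:ℝ) < 1/t)) hc))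

lemma ereal_eq_coe {r : EReal} (h1 : r ≠ ⊥) (h2 : r ≠ ⊤) : ∃ a : ℝ, r = (a : EReal) := by
  induction r with
  | bot => exact absurd rfl h1
  | coe a => exact ⟨a, rfl⟩
  | top => exact absurd rfl h2

lemma IsG.closed' {C A : Set Z} (h : IsG C A) : IsClosed A := by
  rw [h]; exact isClosed_closure

lemma IsG.convex' [IsTopologicalAddGroup Z] [ContinuousSMul ℝ Z] {C A : Set Z}
    (h : IsG C A) : Convex ℝ A := by
  rw [h]; exact (convex_convexHull ℝ _).closure

lemma IsG.add_mem' {C A : Set Z} (h : IsG C A) {a c : Z} (ha : a ∈ A) (hc : c ∈ C) :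
    a + c ∈ A := by
  rw [h]
  exact subset_closure (subset_convexHull ℝ _ (Set.add_mem_add ha hc))

lemma closure_convexHull_subset_halfspace {p : Z →L[ℝ] ℝ} {u : ℝ} {S : Set Z}
    [IsTopologicalAddGroup Z] [ContinuousSMul ℝ Z]
    (h : ∀ z ∈ S, p z ≤ u) : closure (convexHull ℝ S) ⊆ {z | p z ≤ u} := by
  refine closure_minimal (convexHull_min h ?_) (isClosed_le p.continuous continuous_const)
  exact convex_halfSpace_le ⟨fun a b => by simp, fun a b => by simp⟩ u

/-- Any value of a convex set-valued map lies in the closed convex hull of the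
values along the open segment to a point of the domain. -/
lemma mem_closure_convexHull_segment [IsTopologicalAddGroup Z] [ContinuousSMul ℝ Z]
    {f : X → Set Z} (hf : ConvexSV f) {x₀ x : X} {z₁ z : Z}
    (hz₁ : z₁ ∈ f x₀) (hz : z ∈ f x) :
    z ∈ closure (convexHull ℝ (⋃ t ∈ Ioo (0:ℝ) 1, f (x₀ + t • (x - x₀)))) := by
  set S := ⋃ t ∈ Ioo (0:ℝ) 1, f (x₀ + t • (x - x₀)) with hS
  have key : ∀ t : ℝ, t ∈ Ioo (0:ℝ) 1 → t • z₁ + (1 - t) • z ∈ S := by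
    intro t ht
    have h1 : t • z₁ + (1 - t) • z ∈ f (t • x₀ + (1 - t) • x) := by
      refine hf x₀ x t ht (subset_closure ?_)
      exact Set.add_mem_add (Set.smul_mem_smul_set hz₁) (Set.smul_mem_smul_set hz)
    have h2 : t • x₀ + (1 - t) • x = x₀ + (1 - t) • (x - x₀) := by module
    rw [h2] at h1
    have ht' : (1 - t) ∈ Ioo (0:ℝ) 1 := ⟨by linarith [ht.2], by linarith [ht.1]⟩
    exact Set.mem_biUnion ht' h1
  have hcont : Continuous fun t : ℝ => t • z₁ + (1 - t) • z := by fun_prop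
  have htend : Filter.Tendsto (fun n : ℕ => (1 / ((n:ℝ) + 1)) • z₁ +
      (1 - 1 / ((n:ℝ) + 1)) • z) Filter.atTop (nhds z) := by
    have h0 : Filter.Tendsto (fun n : ℕ => 1 / ((n:ℝ) + 1)) Filter.atTop (nhds 0) :=
      tendsto_one_div_add_atTop_nhds_zero_nat
    have := (hcont.tendsto 0).comp h0
    simpa [Function.comp_def] using this
  refine mem_closure_of_tendsto htend ?_
  filter_upwards [Filter.eventually_ge_atTop 1] with n hn
  have hmem : (1 / ((n:ℝ) + 1)) ∈ Ioo (0:ℝ) 1 := by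
    constructor
    · positivity
    · rw [div_lt_one (by positivity)]
      have : (1:ℝ) ≤ (n:ℝ) := by exact_mod_cast hn
      linarith
  exact subset_convexHull ℝ _ (key _ hmem)

/-- Scalarized convexity: if the scalarization strictly decreases at `tstar`, it
strictly decreases at any smaller positive `t`. -/
lemma scal_convex_lt {f : X → Set Z} [IsTopologicalAddGroup Z] [ContinuousSMul ℝ Z]
    (hf : ConvexSV f) {p : Z →L[ℝ] ℝ} {x u : X} {tstar t : ℝ}
    (h0 : 0 < t) (hlt : t < tstar) {s₀ : ℝ} (hs : scal p (f x) = (s₀ : EReal))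
    (hr : scal p (f (x + tstar • u)) < scal p (f x)) :
    scal p (f (x + t • u)) < scal p (f x) := by
  set l := t / tstar with hl
  have htstar : 0 < tstar := h0.trans hlt
  have hl0 : 0 < l := div_pos h0 htstar
  have hl1 : l < 1 := (div_lt_one htstar).mpr hlt
  -- get a point a in f (x + tstar • u) with -(p a) < s₀
  have hr' : scal p (f (x + tstar • u)) < (s₀ : EReal) := by rw [← hs]; exact hr
  obtain ⟨a, ha, hpa⟩ := exists_of_scal_lt hr'
  have hpa' : -(p a) < s₀ := by exact_mod_cast hpa
  -- get a point b in f x with -(p b) < s₀ + δ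
  set δ := l * (s₀ - (-(p a))) / (2 * (1 - l)) with hδ
  have hδpos : 0 < δ := by
    apply div_pos
    · have : 0 < s₀ - (-(p a)) := by linarith
      positivity
    · linarith
  have hblt : scal p (f x) < ((s₀ + δ : ℝ) : EReal) := by
    rw [hs]; exact_mod_cast (by linarith : s₀ < s₀ + δ)
  obtain ⟨b, hb, hpb⟩ := exists_of_scal_lt hblt
  have hpb' : -(p b) < s₀ + δ := by exact_mod_cast hpb
  -- the convex combination lies in f (x + t • u)
  have hmem : l • a + (1 - l) • b ∈ f (x + t • u) := by
    have h1 : l • a + (1 - l) • b ∈ f (l • (x + tstar • u) + (1 - l) • x) := by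
      refine hf (x + tstar • u) x l ⟨hl0, hl1⟩ (subset_closure ?_)
      exact Set.add_mem_add (Set.smul_mem_smul_set ha) (Set.smul_mem_smul_set hb)
    have hts : l * tstar = t := div_mul_cancel₀ t (ne_of_gt htstar)
    have h2 : l • (x + tstar • u) + (1 - l) • x = x + (l * tstar) • u := by module
    rw [h2, hts] at h1
    exact h1
  -- estimate
  have hval : -(p (l • a + (1 - l) • b)) = l * (-(p a)) + (1 - l) * (-(p b)) := by
    rw [map_add, map_smul, map_smul]
    simp [smul_eq_mul]
    ring
  have hkey : l * (-(p a)) + (1 - l) * (-(p b)) < s₀ := by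
    have h1 : (1 - l) * (-(p b)) < (1 - l) * (s₀ + δ) :=
      mul_lt_mul_of_pos_left hpb' (by linarith)
    have h2 : l * (-(p a)) < l * s₀ := mul_lt_mul_of_pos_left hpa' hl0
    have h1l : (1 - l) ≠ 0 := by linarith
    have h3 : (1 - l) * δ = l * (s₀ - (-(p a))) / 2 := by
      rw [hδ, mul_comm (2:ℝ) (1 - l), ← mul_div_assoc, mul_div_mul_left _ _ h1l]
    nlinarith
  calc scal p (f (x + t • u)) ≤ ((-(p (l • a + (1 - l) • b)) : ℝ) : EReal) :=
        scal_le_of_mem hmem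
    _ < (s₀ : EReal) := by rw [hval]; exact_mod_cast hkey
    _ = scal p (f x) := hs.symm

end helperLemmas


theorem stmt_17
  {Z : Type*} [AddCommGroup Z] [Module ℝ Z] [TopologicalSpace Z]
  [IsTopologicalAddGroup Z] [ContinuousSMul ℝ Z] [LocallyConvexSpace ℝ Z] [T2Space Z]
  {X : Type*} [AddCommGroup X] [Module ℝ X]
  (C : Set Z) (hCclosed : IsClosed C) (hCconv : Convex ℝ C)
  (hCcone : ∀ c ∈ C, ∀ r : ℝ, 0 < r → r • c ∈ C) (hC0 : (0:Z) ∈ C)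
  (hdual : (negDualNZ C).Nonempty)
  (f : X → Set Z) (hG : ∀ x, IsG C (f x)) (hf : ConvexSV f)
  (x₀ : X) (hx₀ : (f x₀).Nonempty) :
    (∀ x : X, f x ≠ f x₀ →
      ∃ p ∈ negDualNZ C, phi f p x ≠ ⊥ ∧ phiDer f p x (x₀ - x) < 0) ↔
    (∀ x : X, (f x).Nonempty → f x ≠ f x₀ →
      f x ⊆ closure (convexHull ℝ (⋃ t ∈ Ioo (0:ℝ) 1, f (x₀ + t • (x - x₀))))
      ∧ closure (convexHull ℝ (⋃ t ∈ Ioo (0:ℝ) 1, f (x₀ + t • (x - x₀)))) ≠ f x) := by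
  constructor
  · -- mvi implies inclusion and difference
    intro h x hxne hne
    obtain ⟨z₁, hz₁⟩ := hx₀
    refine ⟨fun z hz => mem_closure_convexHull_segment hf hz₁ hz, ?_⟩
    obtain ⟨p, hp, hφ, hder⟩ := h x hne
    have hex : ∃ t ∈ Ioi (0:ℝ), (((1/t:ℝ)):EReal) *
        eresid (phi f p (x + t • (x₀ - x))) (phi f p x) < 0 := by
      by_contra hc
      push_neg at hc
      have h0 : (0:EReal) ≤ phiDer f p x (x₀ - x) := le_iInf₂ hc
      exact absurd hder (not_lt.2 h0)
    obtain ⟨ts, hts, hterm⟩ := hex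
    rw [mem_Ioi] at hts
    have he : eresid (phi f p (x + ts • (x₀ - x))) (phi f p x) < 0 :=
      neg_of_term_neg hts hterm
    obtain ⟨t', ht'neg, ht'⟩ := eresid_lt_zero he
    obtain ⟨s₀, hs₀⟩ := ereal_eq_coe hφ (ne_of_lt (scal_lt_top hxne))
    have hrs : scal p (f (x + ts • (x₀ - x))) < scal p (f x) := by
      show phi f p (x + ts • (x₀ - x)) < phi f p x
      refine lt_of_le_of_lt ht' ?_
      rw [hs₀, ← EReal.coe_add]
      exact_mod_cast (by linarith : s₀ + t' < s₀)
    have hex2 : ∃ t ∈ Ioo (0:ℝ) 1, scal p (f (x + t • (x₀ - x))) < scal p (f x) := by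
      rcases lt_or_ge ts 1 with h1 | h1
      · exact ⟨ts, ⟨hts, h1⟩, hrs⟩
      · exact ⟨1/2, ⟨by norm_num, by norm_num⟩,
          scal_convex_lt hf (by norm_num) (by linarith) hs₀ hrs⟩
    obtain ⟨t, ht01, hdec⟩ := hex2
    intro hD
    have hsub : f (x + t • (x₀ - x)) ⊆ f x := by
      rw [← hD]
      intro w hw
      refine subset_closure (subset_convexHull ℝ _ ?_)
      have heq : x + t • (x₀ - x) = x₀ + (1 - t) • (x - x₀) := by module
      rw [heq] at hw
      exact Set.mem_biUnion ⟨by linarith [ht01.2], by linarith [ht01.1]⟩ hw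
    exact absurd (scal_anti (p := p) hsub) (not_le.2 hdec)
  · intro h x hne
    by_cases hxe : (f x).Nonempty
    · obtain ⟨hincl, hneq⟩ := h x hxe hne
      obtain ⟨zb, hzbD, hzbx⟩ :=
        Set.exists_of_ssubset (ssubset_iff_subset_ne.mpr ⟨hincl, fun hh => hneq hh.symm⟩)
      obtain ⟨p, u, hpa, hpz⟩ :=
        geometric_hahn_banach_closed_point (hG x).convex' (hG x).closed' hzbx
      obtain ⟨z0, hz0⟩ := hxe
      have hpC : ∀ c ∈ C, p c ≤ 0 := by
        intro c hc
        by_contra hpc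
        push_neg at hpc
        set r := (u - p z0 + 1) / (p c) with hrdef
        have hrpos : 0 < r := div_pos (by linarith [hpa z0 hz0]) hpc
        have hmem : z0 + r • c ∈ f x := (hG x).add_mem' hz0 (hCcone c hc r hrpos)
        have hineq := hpa _ hmem
        rw [map_add, map_smul, smul_eq_mul, hrdef,
          div_mul_cancel₀ _ (ne_of_gt hpc)] at hineq
        linarith
      have hpne : p ≠ 0 := by
        intro h0
        have h1 := hpa z0 hz0
        rw [h0] at h1 hpz
        simp at h1 hpz
        linarith
      have hφlb : ((-u : ℝ) : EReal) ≤ phi f p x :=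
        le_scal (fun z hz => by linarith [hpa z hz])
      have hφbot : phi f p x ≠ ⊥ := by
        intro hbot
        rw [hbot] at hφlb
        exact absurd (le_bot_iff.mp hφlb) (EReal.coe_ne_bot _)
      refine ⟨p, ⟨hpC, hpne⟩, hφbot, ?_⟩
      have hexw : ∃ w ∈ ⋃ s ∈ Ioo (0:ℝ) 1, f (x₀ + s • (x - x₀)), u < p w := by
        by_contra hc
        push_neg at hc
        have hh := closure_convexHull_subset_halfspace hc hzbD
        exact absurd hpz (not_lt.2 hh)
      obtain ⟨w, hw, hpw⟩ := hexw
      rw [Set.mem_iUnion₂] at hw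
      obtain ⟨s, hs01, hws⟩ := hw
      have ht0 : 0 < 1 - s := by linarith [hs01.2]
      have heq : x + (1 - s) • (x₀ - x) = x₀ + s • (x - x₀) := by module
      have hφt : phi f p (x + (1 - s) • (x₀ - x)) ≤ ((-(p w) : ℝ) : EReal) := by
        show scal p (f (x + (1 - s) • (x₀ - x))) ≤ _
        rw [heq]
        exact scal_le_of_mem hws
      obtain ⟨s₀, hs₀⟩ := ereal_eq_coe hφbot (ne_of_lt (scal_lt_top ⟨z0, hz0⟩))
      have hus₀ : -u ≤ s₀ := by
        rw [hs₀] at hφlb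
        exact_mod_cast hφlb
      have ht'neg : -(p w) - s₀ < 0 := by linarith
      have heres : eresid (phi f p (x + (1 - s) • (x₀ - x))) (phi f p x)
          ≤ ((-(p w) - s₀ : ℝ) : EReal) := by
        apply eresid_le
        rw [hs₀, ← EReal.coe_add]
        refine le_trans hφt ?_
        exact_mod_cast (by linarith : -(p w) ≤ s₀ + (-(p w) - s₀))
      have hterm : (((1/(1 - s):ℝ)):EReal) *
          eresid (phi f p (x + (1 - s) • (x₀ - x))) (phi f p x) < 0 :=
        term_neg ht0 (lt_of_le_of_lt heres (by exact_mod_cast ht'neg))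
      exact lt_of_le_of_lt (iInf₂_le (1 - s) (mem_Ioi.mpr ht0)) hterm
    · obtain ⟨p, hp⟩ := hdual
      rw [Set.not_nonempty_iff_eq_empty] at hxe
      have hφtop : phi f p x = ⊤ := by
        show scal p (f x) = ⊤
        rw [hxe, scal]
        simp
      refine ⟨p, hp, by rw [hφtop]; simp, ?_⟩
      have heres : eresid (phi f p (x + (1:ℝ) • (x₀ - x))) (phi f p x)
          ≤ ((-1 : ℝ) : EReal) := by
        apply eresid_le
        rw [hφtop, EReal.top_add_coe]
        exact le_top
      have hterm : (((1/(1:ℝ)):ℝ):EReal) *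
          eresid (phi f p (x + (1:ℝ) • (x₀ - x))) (phi f p x) < 0 :=
        term_neg one_pos (lt_of_le_of_lt heres (EReal.coe_neg'.2 (by norm_num)))
      exact lt_of_le_of_lt (iInf₂_le (1:ℝ) (mem_Ioi.mpr one_pos)) hterm
end

section
/- Let ψ : S ⊆ X → Z be a C-convex function and let f = ψ^C be its epigraphical extension. Then for all x₀, x ∈ S and all t ∈ (0,1), writing x_t = x₀ + t(x−x₀): (i) (1/t)·(f(x_t) ⊖ f(x₀)) = (1/t)(ψ(x_t) − ψ(x₀)) + C; (ii) the difference quotient is decreasing as t decreases to 0, i.e. for 0 < s ≤ t < 1 one has (1/t)(ψ(x_t) − ψ(x₀)) − (1/s)(ψ(x_s) − ψ(x₀)) ∈ C; (iii) the strong regularity condition holds: for every z* ∈ C⁻∖{0}, inf{−z*(z) : z ∈ f′(x₀, x−x₀)} = φ′_{f,z*}(x₀, x−x₀). -/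
open Set Pointwise

theorem stmt_19
  {Z : Type*} [AddCommGroup Z] [Module ℝ Z] [TopologicalSpace Z]
  [IsTopologicalAddGroup Z] [ContinuousSMul ℝ Z] [LocallyConvexSpace ℝ Z] [T2Space Z]
  {X : Type*} [AddCommGroup X] [Module ℝ X]
  (C : Set Z) (hCclosed : IsClosed C) (hCconv : Convex ℝ C)
  (hCcone : ∀ c ∈ C, ∀ r : ℝ, 0 < r → r • c ∈ C) (hC0 : (0:Z) ∈ C)
  (hdual : (negDualNZ C).Nonempty)
  (S : Set X) (hS : Convex ℝ S) (ψ : X → Z)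
  (hψ : ∀ x₁ ∈ S, ∀ x₂ ∈ S, ∀ t ∈ Ioo (0:ℝ) 1,
    (1 - t) • ψ x₁ + t • ψ x₂ ∈ {ψ (x₁ + t • (x₂ - x₁))} + C)
  (f : X → Set Z) (hf₁ : ∀ x ∈ S, f x = {ψ x} + C) (hf₂ : ∀ x ∉ S, f x = (∅ : Set Z))
  (x₀ : X) (hx₀ : x₀ ∈ S) (x : X) (hx : x ∈ S) :
    (∀ t ∈ Ioo (0:ℝ) 1,
      (1 / t) • resid (f (x₀ + t • (x - x₀))) (f x₀)
        = {(1 / t) • (ψ (x₀ + t • (x - x₀)) - ψ x₀)} + C)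
    ∧ (∀ s t : ℝ, 0 < s → s ≤ t → t < 1 →
        (1 / t) • (ψ (x₀ + t • (x - x₀)) - ψ x₀)
          - (1 / s) • (ψ (x₀ + s • (x - x₀)) - ψ x₀) ∈ C)
    ∧ (∀ p ∈ negDualNZ C, scal p (sder f x₀ (x - x₀)) = phiDer f p x₀ (x - x₀)) := by
  -- basic facts about the cone C
  have hCadd : ∀ a ∈ C, ∀ b ∈ C, a + b ∈ C := by
    intro a ha b hb
    have h2 : (2:ℝ) • ((1/2 : ℝ) • a + (1/2 : ℝ) • b) ∈ C := by
      refine hCcone _ ?_ 2 (by norm_num)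
      exact hCconv ha hb (by norm_num) (by norm_num) (by norm_num)
    have heq : a + b = (2:ℝ) • ((1/2 : ℝ) • a + (1/2 : ℝ) • b) := by module
    rwa [heq]
  have hsmulC : ∀ r : ℝ, 0 < r → r • C = C := by
    intro r hr
    apply Set.Subset.antisymm
    · rintro w ⟨c, hc, rfl⟩
      exact hCcone c hc r hr
    · intro c hc
      refine ⟨(1/r) • c, hCcone c hc (1/r) (by positivity), ?_⟩
      show r • ((1/r) • c) = c
      rw [smul_smul]
      field_simp
      exact one_smul ℝ c
  have hmemS : ∀ (a z : Z), z ∈ ({a} : Set Z) + C ↔ z - a ∈ C := by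
    intro a z
    constructor
    · rintro ⟨w, hw, c, hc, rfl⟩
      rw [Set.mem_singleton_iff] at hw; subst hw
      simpa using hc
    · intro h
      refine ⟨a, rfl, z - a, h, ?_⟩
      show a + (z - a) = z
      abel
  have hres : ∀ a b : Z, resid ({a} + C) ({b} + C) = ({a - b} : Set Z) + C := by
    intro a b
    ext z
    simp only [resid, Set.mem_setOf_eq]
    rw [hmemS]
    constructor
    · intro h
      have hb : b + z ∈ ({b} : Set Z) + C + {z} :=
        ⟨b, ⟨b, rfl, 0, hC0, add_zero b⟩, z, rfl, rfl⟩
      have := (hmemS a (b + z)).mp (h hb)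
      have heq : z - (a - b) = b + z - a := by abel
      rwa [heq]
    · intro hz w hw
      obtain ⟨v, hv, z', hz', rfl⟩ := hw
      rw [Set.mem_singleton_iff] at hz'; subst z'
      obtain ⟨b', hb', c, hc, rfl⟩ := hv
      rw [Set.mem_singleton_iff] at hb'; subst b'
      rw [hmemS]
      have heq : b + c + z - a = c + (z - (a - b)) := by abel
      rw [heq]
      exact hCadd c hc _ hz
  have hySmem : ∀ t ∈ Ioo (0:ℝ) 1, x₀ + t • (x - x₀) ∈ S := by
    intro t ht
    have h := hS hx₀ hx (by linarith [ht.2] : (0:ℝ) ≤ 1 - t) ht.1.le (by ring)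
    have heq : x₀ + t • (x - x₀) = (1 - t) • x₀ + t • x := by module
    rwa [heq]
  -- part (i)
  have part1 : ∀ t ∈ Ioo (0:ℝ) 1,
      (1 / t) • resid (f (x₀ + t • (x - x₀))) (f x₀)
        = ({(1 / t) • (ψ (x₀ + t • (x - x₀)) - ψ x₀)} : Set Z) + C := by
    intro t ht
    have hdist : ∀ (r : ℝ) (A B : Set Z), r • (A + B) = r • A + r • B := by
      intro r A B
      simp [← Set.image_smul, Set.image_add, smul_add]
    rw [hf₁ _ (hySmem t ht), hf₁ _ hx₀, hres, hdist,
      hsmulC (1/t) (one_div_pos.mpr ht.1), Set.smul_set_singleton]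
  -- key monotonicity (part (ii), with the membership hypothesis made explicit)
  have hmono : ∀ s t : ℝ, 0 < s → s ≤ t → x₀ + t • (x - x₀) ∈ S →
      (1 / t) • (ψ (x₀ + t • (x - x₀)) - ψ x₀)
        - (1 / s) • (ψ (x₀ + s • (x - x₀)) - ψ x₀) ∈ C := by
    intro s t hs hst hyt
    rcases eq_or_lt_of_le hst with rfl | hlt
    · simpa using hC0
    · have ht : 0 < t := hs.trans hlt
      have hτ : s / t ∈ Ioo (0:ℝ) 1 := ⟨by positivity, (div_lt_one ht).mpr hlt⟩
      have h1 := hψ x₀ hx₀ _ hyt (s/t) hτ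
      have heq : x₀ + (s/t) • (x₀ + t • (x - x₀) - x₀) = x₀ + s • (x - x₀) := by
        have hs' : s ≠ 0 := hs.ne'
        have ht' : t ≠ 0 := ht.ne'
        match_scalars <;> field_simp <;> ring
      rw [heq, hmemS] at h1
      have h2 := hCcone _ h1 (1/s) (by positivity)
      have heq2 : (1 / t) • (ψ (x₀ + t • (x - x₀)) - ψ x₀)
          - (1 / s) • (ψ (x₀ + s • (x - x₀)) - ψ x₀)
          = (1/s) • ((1 - s/t) • ψ x₀ + (s/t) • ψ (x₀ + t • (x - x₀))
              - ψ (x₀ + s • (x - x₀))) := by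
        have hs' : s ≠ 0 := hs.ne'
        have ht' : t ≠ 0 := ht.ne'
        match_scalars <;> field_simp <;> ring
      rwa [heq2]
  refine ⟨part1, fun s t hs hst ht1 => hmono s t hs hst (hySmem t ⟨hs.trans_le hst, ht1⟩), ?_⟩
  -- part (iii)
  rintro p ⟨hpC, -⟩
  set g : ℝ → Z := fun t => (1 / t) • (ψ (x₀ + t • (x - x₀)) - ψ x₀) with hgdef
  set L : EReal := ⨅ t ∈ Ioo (0:ℝ) 1, ((-(p (g t)) : ℝ) : EReal) with hL
  have hphiS : ∀ v ∈ S, phi f p v = ((-(p (ψ v)) : ℝ) : EReal) := by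
    intro v hv
    rw [phi, hf₁ v hv, scal]
    apply le_antisymm
    · apply sInf_le
      exact ⟨ψ v, ⟨ψ v, rfl, 0, hC0, add_zero _⟩, rfl⟩
    · apply le_sInf
      rintro b ⟨z, ⟨a, ha, c, hc, rfl⟩, rfl⟩
      rw [Set.mem_singleton_iff] at ha; subst ha
      rw [EReal.coe_le_coe_iff, map_add]
      have := hpC c hc; linarith
  have hphiNS : ∀ v ∉ S, phi f p v = (⊤ : EReal) := by
    intro v hv
    rw [phi, hf₂ v hv, scal, Set.image_empty, sInf_empty]
  have heres : ∀ a b : ℝ, eresid (a : EReal) (b : EReal) = ((a - b : ℝ) : EReal) := by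
    intro a b
    rw [eresid]
    apply le_antisymm
    · apply sInf_le
      refine ⟨a - b, ?_, rfl⟩
      show (a : EReal) ≤ (b : EReal) + ((a - b : ℝ) : EReal)
      rw [← EReal.coe_add]
      exact EReal.coe_le_coe_iff.mpr (by linarith)
    · apply le_sInf
      rintro c ⟨u, hu, rfl⟩
      rw [Set.mem_setOf_eq, ← EReal.coe_add] at hu
      exact EReal.coe_le_coe_iff.mpr (by linarith [EReal.coe_le_coe_iff.mp hu])
  have herestop : ∀ b : ℝ, eresid (⊤ : EReal) (b : EReal) = (⊤ : EReal) := by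
    intro b
    rw [eresid]
    have hempty : {u : ℝ | (⊤ : EReal) ≤ (b : EReal) + (u : EReal)} = ∅ := by
      ext u
      simp only [Set.mem_setOf_eq, Set.mem_empty_iff_false, iff_false]
      rw [← EReal.coe_add]
      exact fun h => (EReal.coe_ne_top _) (top_le_iff.mp h)
    rw [hempty, Set.image_empty, sInf_empty]
  have hpm : ∀ s t : ℝ, 0 < s → s ≤ t → x₀ + t • (x - x₀) ∈ S →
      -(p (g s)) ≤ -(p (g t)) := by
    intro s t hs hst hyt
    have h := hpC _ (hmono s t hs hst hyt)
    rw [map_sub] at h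
    simp only [hgdef]
    linarith
  have hgp : ∀ t : ℝ, p (g t) = (1/t) * (p (ψ (x₀ + t • (x - x₀))) - p (ψ x₀)) := by
    intro t
    simp [hgdef, map_smul, map_sub]
  -- g t ∈ sder for t ∈ (0,1)
  have hgt_mem : ∀ t ∈ Ioo (0:ℝ) 1, g t ∈ sder f x₀ (x - x₀) := by
    intro t ht
    rw [sder]
    rw [Set.mem_iInter₂]
    intro t₀ ht₀
    rw [Set.mem_Ioi] at ht₀
    set s := min t (t₀/2) with hsdef
    have hs0 : 0 < s := lt_min ht.1 (by linarith)
    have hst : s ≤ t := min_le_left _ _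
    have hs1 : s < 1 := lt_of_le_of_lt hst ht.2
    have hst₀ : s < t₀ := lt_of_le_of_lt (min_le_right _ _) (by linarith)
    have hmemD : g t ∈ ⋃ r ∈ Ioo (0:ℝ) t₀, (1 / r) • resid (f (x₀ + r • (x - x₀))) (f x₀) := by
      apply Set.mem_biUnion (show s ∈ Ioo (0:ℝ) t₀ from ⟨hs0, hst₀⟩)
      rw [part1 s ⟨hs0, hs1⟩]
      exact ⟨g s, rfl, g t - g s, hmono s t hs0 hst (hySmem t ht), show g s + (g t - g s) = g t by abel⟩
    exact subset_closure (subset_convexHull ℝ _ hmemD)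
  have hterm : ∀ t : ℝ, 0 < t → x₀ + t • (x - x₀) ∈ S →
      (((1 / t : ℝ)) : EReal) * eresid (phi f p (x₀ + t • (x - x₀))) (phi f p x₀)
        = ((-(p (g t)) : ℝ) : EReal) := by
    intro t ht hyt
    rw [hphiS _ hyt, hphiS _ hx₀, heres, ← EReal.coe_mul]
    congr 1
    rw [hgp t]
    ring
  have htermtop : ∀ t : ℝ, 0 < t → x₀ + t • (x - x₀) ∉ S →
      (((1 / t : ℝ)) : EReal) * eresid (phi f p (x₀ + t • (x - x₀))) (phi f p x₀)
        = (⊤ : EReal) := by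
    intro t ht hyt
    rw [hphiNS _ hyt, hphiS _ hx₀, herestop]
    exact EReal.mul_top_of_pos (by exact_mod_cast (by positivity : (0:ℝ) < 1/t))
  have hPD : phiDer f p x₀ (x - x₀) = L := by
    rw [phiDer]
    apply le_antisymm
    · rw [hL]
      refine le_iInf₂ fun t ht => ?_
      calc (⨅ t ∈ Ioi (0:ℝ), (((1 / t : ℝ)) : EReal) *
              eresid (phi f p (x₀ + t • (x - x₀))) (phi f p x₀))
          ≤ (((1 / t : ℝ)) : EReal) * eresid (phi f p (x₀ + t • (x - x₀))) (phi f p x₀) :=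
            iInf₂_le t ht.1
        _ = ((-(p (g t)) : ℝ) : EReal) := hterm t ht.1 (hySmem t ht)
    · refine le_iInf₂ fun t ht => ?_
      rw [Set.mem_Ioi] at ht
      by_cases hyt : x₀ + t • (x - x₀) ∈ S
      · rw [hterm t ht hyt]
        have hs : min t (1/2) ∈ Ioo (0:ℝ) 1 :=
          ⟨lt_min ht (by norm_num), lt_of_le_of_lt (min_le_right _ _) (by norm_num)⟩
        calc L ≤ ((-(p (g (min t (1/2)))) : ℝ) : EReal) := by
              rw [hL]; exact iInf₂_le (min t (1/2)) hs
          _ ≤ ((-(p (g t)) : ℝ) : EReal) :=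
              EReal.coe_le_coe_iff.mpr (hpm _ t hs.1 (min_le_left _ _) hyt)
      · rw [htermtop t ht hyt]
        exact le_top
  have hSL : scal p (sder f x₀ (x - x₀)) = L := by
    apply le_antisymm
    · rw [hL]
      refine le_iInf₂ fun t ht => ?_
      rw [scal]
      exact sInf_le ⟨g t, hgt_mem t ht, rfl⟩
    · by_cases hLbot : L = ⊥
      · rw [hLbot]; exact bot_le
      · have hLtop : L ≠ ⊤ := by
          intro h
          have h2 : L ≤ ((-(p (g (1/2))) : ℝ) : EReal) := by
            rw [hL]; exact iInf₂_le (1/2) ⟨by norm_num, by norm_num⟩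
          rw [h] at h2
          exact (EReal.coe_ne_top _) (top_le_iff.mp h2)
        obtain ⟨l, hl⟩ : ∃ l : ℝ, L = (l : EReal) :=
          ⟨L.toReal, (EReal.coe_toReal hLtop hLbot).symm⟩
        have hlb : ∀ t ∈ Ioo (0:ℝ) 1, l ≤ -(p (g t)) := by
          intro t ht
          have h2 : L ≤ ((-(p (g t)) : ℝ) : EReal) := by
            rw [hL]; exact iInf₂_le t ht
          rw [hl] at h2
          exact EReal.coe_le_coe_iff.mp h2
        have hKc : Convex ℝ {w : Z | p w ≤ -l} := by
          have : {w : Z | p w ≤ -l} = (p : Z →ₗ[ℝ] ℝ) ⁻¹' Iic (-l) := rfl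
          rw [this]
          exact (convex_Iic (-l)).linear_preimage _
        have hKcl : IsClosed {w : Z | p w ≤ -l} :=
          IsClosed.preimage p.continuous isClosed_Iic
        have hsub : (⋃ t ∈ Ioo (0:ℝ) 1, (1 / t) • resid (f (x₀ + t • (x - x₀))) (f x₀))
            ⊆ {w : Z | p w ≤ -l} := by
          intro w hw
          rw [Set.mem_iUnion₂] at hw
          obtain ⟨t, ht, hw⟩ := hw
          rw [part1 t ht] at hw
          obtain ⟨a, ha, c, hc, rfl⟩ := hw
          rw [Set.mem_singleton_iff] at ha; subst ha
          have h1 := hlb t ht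
          have h2 := hpC c hc
          simp only [Set.mem_setOf_eq, map_add]
          simp only [hgdef] at h1
          linarith
        rw [scal]
        apply le_sInf
        rintro b ⟨z, hz, rfl⟩
        rw [sder, Set.mem_iInter₂] at hz
        have hz1 := hz 1 (Set.mem_Ioi.mpr one_pos)
        have hzK : z ∈ {w : Z | p w ≤ -l} :=
          closure_minimal (convexHull_min hsub hKc) hKcl hz1
        rw [hl]
        exact EReal.coe_le_coe_iff.mpr (by linarith [Set.mem_setOf_eq ▸ hzK])
  rw [hSL, hPD]
end
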